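/- arXiv:2311.06138 — 2 statements merged into one kernel-verified Lean document; each statement's English description precedes it below -/
import Mathlib

section
/- Let X be a nonnegative real random variable with P(X ≥ E[X] + t) ≤ exp(-t²/(2σ²)) for all t > 0. Then for every R > E[X], E[X² · 1_{X ≥ R}] ≤ exp(-(R - E[X])²/(4σ²)) · √(2π) · ((E[X])² + 2σ²). -/
open MeasureTheory Real Set

open intervalIntegral in
lemma my_integral_id {a b : ℝ} : ∫ x in a..b, x = (b ^ 2 - a ^ 2) / 2 := integral_id

lemma integral_Ioi_shift (c : ℝ) (f : ℝ → ℝ) :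
    ∫ t in Ioi c, f (t - c) = ∫ t in Ioi (0:ℝ), f t := by
  rw [← integral_indicator measurableSet_Ioi, ← integral_indicator measurableSet_Ioi]
  rw [← integral_sub_right_eq_self (fun t => (Ioi (0:ℝ)).indicator f t) c]
  congr 1
  ext t
  by_cases h : c < t
  · rw [Set.indicator_of_mem (by exact h : t ∈ Ioi c),
      Set.indicator_of_mem (by simp [h, sub_pos] : t - c ∈ Ioi (0:ℝ))]
  · rw [Set.indicator_of_notMem (by exact h : t ∉ Ioi c),
      Set.indicator_of_notMem (by simp [sub_pos]; exact not_lt.mp h : t - c ∉ Ioi (0:ℝ))]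

lemma gauss_shift (R : ℝ) (σ : ℝ) (hσ : 0 < σ) :
    ∫ t in Ioi R, Real.exp (-(t-R)^2/(2*σ^2)) = Real.sqrt (2*π) * σ / 2 := by
  rw [integral_Ioi_shift R (fun t => Real.exp (-t^2/(2*σ^2)))]
  have : ∀ t : ℝ, Real.exp (-t^2/(2*σ^2)) = Real.exp (-(1/(2*σ^2)) * t^2) := by
    intro t; congr 1; field_simp
  simp_rw [this]
  rw [integral_gaussian_Ioi]
  rw [show π / (1/(2*σ^2)) = 2*π*σ^2 by field_simp]
  rw [show 2*π*σ^2 = (2*π) * σ^2 by ring, Real.sqrt_mul (by positivity) (σ^2),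
    Real.sqrt_sq hσ.le]

lemma gauss_integrable (R : ℝ) (σ : ℝ) (hσ : 0 < σ) :
    IntegrableOn (fun t => Real.exp (-(t-R)^2/(2*σ^2))) (Ioi R) := by
  have hb : (0:ℝ) < 1/(2*σ^2) := by positivity
  have h1 : Integrable (fun t : ℝ => Real.exp (-(1/(2*σ^2)) * t^2)) :=
    integrable_exp_neg_mul_sq hb
  have h2 : Integrable (fun t : ℝ => Real.exp (-(1/(2*σ^2)) * (t-R)^2)) :=
    h1.comp_sub_right R
  have : (fun t : ℝ => Real.exp (-(t-R)^2/(2*σ^2)))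
      = fun t : ℝ => Real.exp (-(1/(2*σ^2)) * (t-R)^2) := by
    funext t; congr 1; field_simp
  rw [this]
  exact h2.integrableOn

lemma f1_deriv (m σ : ℝ) (hσ : 0 < σ) (t : ℝ) :
    HasDerivAt (fun t => -(2*σ^2) * Real.exp (-(t-m)^2/(2*σ^2)))
      (2*(t-m)*Real.exp (-(t-m)^2/(2*σ^2))) t := by
  have h1 : HasDerivAt (fun t : ℝ => -(t-m)^2/(2*σ^2))
      (-(2*(t-m)^1*1)/(2*σ^2)) t := by
    exact (((hasDerivAt_id t).sub_const m).pow 2).neg.div_const (2*σ^2)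
  have h2 := (h1.exp).const_mul (-(2*σ^2))
  refine h2.congr_deriv ?_
  have hσ2 : (2*σ^2) ≠ 0 := by positivity
  field_simp

lemma f1_tendsto (m σ : ℝ) (hσ : 0 < σ) :
    Filter.Tendsto (fun t => -(2*σ^2) * Real.exp (-(t-m)^2/(2*σ^2)))
      Filter.atTop (nhds 0) := by
  have h0 : Filter.Tendsto (fun t : ℝ => (t-m)^2) Filter.atTop Filter.atTop := by
    have := (Filter.tendsto_pow_atTop (two_ne_zero)).comp
      (Filter.tendsto_atTop_add_const_right Filter.atTop (-m) Filter.tendsto_id)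
    simpa [sub_eq_add_neg, Function.comp_def] using this
  have h1 : Filter.Tendsto (fun t : ℝ => -(t-m)^2/(2*σ^2)) Filter.atTop Filter.atBot := by
    have hd := h0.atTop_div_const (by positivity : (0:ℝ) < 2*σ^2)
    have := Filter.tendsto_neg_atTop_atBot.comp hd
    simpa [Function.comp_def, neg_div] using this
  have h2 := Real.tendsto_exp_atBot.comp h1
  have h3 := h2.const_mul (-(2*σ^2))
  simpa using h3

lemma f1_integral (m R σ : ℝ) (hσ : 0 < σ) (hmR : m < R) :
    ∫ t in Ioi R, 2*(t-m)*Real.exp (-(t-m)^2/(2*σ^2))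
      = 2*σ^2 * Real.exp (-(R-m)^2/(2*σ^2)) := by
  have h := integral_Ioi_of_hasDerivAt_of_nonneg' (a := R)
    (fun x _ => f1_deriv m σ hσ x)
    (fun x hx => by
      have : m < x := hmR.trans hx
      exact mul_nonneg (by linarith) (Real.exp_pos _).le)
    (f1_tendsto m σ hσ)
  rw [h]
  ring

lemma f1_integrable (m R σ : ℝ) (hσ : 0 < σ) (hmR : m < R) :
    IntegrableOn (fun t => 2*(t-m)*Real.exp (-(t-m)^2/(2*σ^2))) (Ioi R) := by
  exact integrableOn_Ioi_deriv_of_nonneg' (fun x _ => f1_deriv m σ hσ x)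
    (fun x hx => by
      have : m < x := hmR.trans hx
      exact mul_nonneg (by linarith) (Real.exp_pos _).le)
    (f1_tendsto m σ hσ)

lemma poly_ineq (K m τ s : ℝ) (hK : 5/2 ≤ K) (hm : 0 ≤ m) (hs : 0 < s) (hτ : 0 ≤ τ) :
    4*s^2*((m+τ)^2 + 2*s^2 + K*m*s) ≤ K*(m^2+2*s^2)*(4*s^2+τ^2) := by
  have hK0 : (0:ℝ) < K := by linarith
  have h19 : (0:ℝ) ≤ 19*K^2 - 24*K - 48 := by nlinarith
  have hKD : 0 ≤ K * (K*(m^2+2*s^2)*(4*s^2+τ^2) - 4*s^2*((m+τ)^2 + 2*s^2 + K*m*s)) := by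
    nlinarith [sq_nonneg (K*m*τ - 4*s^2),
      mul_nonneg (sq_nonneg K) (sq_nonneg (6*m*s - 5*s^2)),
      mul_nonneg (by linarith : (0:ℝ) ≤ 8*K - 20)
        (mul_nonneg (mul_nonneg hK0.le (sq_nonneg m)) (sq_nonneg s)),
      mul_nonneg (by linarith : (0:ℝ) ≤ 2*K - 4)
        (mul_nonneg (mul_nonneg hK0.le (sq_nonneg s)) (sq_nonneg τ)),
      mul_nonneg h19 (sq_nonneg (s^2))]
  nlinarith [mul_pos hK0 hK0]

lemma exp_bound (m τ s : ℝ) (hm : 0 ≤ m) (hτ : 0 < τ) (hs : 0 < s) :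
    Real.exp (-τ^2/(2*s^2)) * ((m+τ)^2 + 2*s^2 + Real.sqrt (2*π) * m * s) ≤
      Real.exp (-τ^2/(4*s^2)) * Real.sqrt (2*π) * (m^2 + 2*s^2) := by
  set K := Real.sqrt (2*π) with hKdef
  have hK : 5/2 ≤ K := by
    rw [hKdef, show (5/2:ℝ) = Real.sqrt ((5/2)^2) by
      rw [Real.sqrt_sq (by norm_num : (0:ℝ) ≤ 5/2)]]
    apply Real.sqrt_le_sqrt
    nlinarith [Real.pi_gt_d6]
  have hK0 : (0:ℝ) < K := by linarith
  set x := τ^2/(4*s^2) with hxdef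
  have hx : 0 < x := by positivity
  have hB : 0 ≤ (m+τ)^2 + 2*s^2 + K*m*s := by positivity
  -- exp(-x) ≤ (1+x)⁻¹
  have he1 : Real.exp (-x) * (1+x) ≤ 1 := by
    have h := Real.add_one_le_exp x
    have := Real.exp_pos x
    rw [Real.exp_neg]
    rw [inv_mul_le_iff₀ this]
    linarith
  -- main inner bound
  have hinner : Real.exp (-x) * ((m+τ)^2 + 2*s^2 + K*m*s) ≤ K * (m^2 + 2*s^2) := by
    have hpoly := poly_ineq K m τ s hK hm hs hτ.le
    have h1x : (0:ℝ) < 1 + x := by linarith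
    have hBle : (m+τ)^2 + 2*s^2 + K*m*s ≤ K*(m^2+2*s^2)*(1+x) := by
      have h4s : (0:ℝ) < 4*s^2 := by positivity
      rw [hxdef, show K*(m^2+2*s^2)*(1 + τ^2/(4*s^2))
          = K*(m^2+2*s^2)*(4*s^2+τ^2) / (4*s^2) by field_simp,
        le_div_iff₀ h4s]
      linarith [hpoly]
    calc Real.exp (-x) * ((m+τ)^2 + 2*s^2 + K*m*s)
        ≤ Real.exp (-x) * (K*(m^2+2*s^2)*(1+x)) := by
          apply mul_le_mul_of_nonneg_left hBle (Real.exp_pos _).le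
      _ = (Real.exp (-x) * (1+x)) * (K*(m^2+2*s^2)) := by ring
      _ ≤ 1 * (K*(m^2+2*s^2)) := by
          apply mul_le_mul_of_nonneg_right he1 (by positivity)
      _ = K * (m^2 + 2*s^2) := by ring
  have hsplit : Real.exp (-τ^2/(2*s^2)) = Real.exp (-x) * Real.exp (-x) := by
    rw [← Real.exp_add, hxdef]
    congr 1
    field_simp
    ring
  have hx4 : Real.exp (-τ^2/(4*s^2)) = Real.exp (-x) := by rw [hxdef]; congr 1; ring
  rw [hsplit, hx4, mul_assoc (Real.exp (-x)) K, mul_assoc]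
  exact mul_le_mul_of_nonneg_left hinner (Real.exp_pos _).le
set_option maxHeartbeats 1000000 in
theorem stmt_4 {Ω : Type*} [MeasurableSpace Ω] (P : Measure Ω) [IsProbabilityMeasure P]
    (X : Ω → ℝ) (hXmeas : Measurable X) (hXnonneg : ∀ ω, 0 ≤ X ω)
    (hXint : Integrable X P) (σ : ℝ) (hσ : 0 < σ)
    (htail : ∀ t : ℝ, 0 < t →
      P {ω : Ω | (∫ ω', X ω' ∂P) + t ≤ X ω} ≤
        ENNReal.ofReal (Real.exp (-t ^ 2 / (2 * σ ^ 2))))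
    (R : ℝ) (hR : (∫ ω', X ω' ∂P) < R) :
    ∫ ω, (X ω) ^ 2 * Set.indicator {ω' : Ω | R ≤ X ω'} (fun _ => (1:ℝ)) ω ∂P ≤
      Real.exp (-(R - ∫ ω', X ω' ∂P) ^ 2 / (4 * σ ^ 2)) * Real.sqrt (2 * π) *
        ((∫ ω', X ω' ∂P) ^ 2 + 2 * σ ^ 2) := by
  have hm0 : 0 ≤ ∫ ω', X ω' ∂P := integral_nonneg hXnonneg
  set m := ∫ ω', X ω' ∂P with hmdef
  set τ := R - m with hτdef
  have hτ : 0 < τ := sub_pos.mpr hR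
  have hR0 : 0 < R := lt_of_le_of_lt hm0 hR
  set C := Real.exp (-τ^2/(2*σ^2)) with hCdef
  have hC0 : 0 < C := Real.exp_pos _
  set A : Set Ω := {ω' | R ≤ X ω'} with hAdef
  have hAmeas : MeasurableSet A := measurableSet_le measurable_const hXmeas
  set Y : Ω → ℝ := fun ω => X ω * A.indicator (fun _ => (1:ℝ)) ω with hYdef
  have hYmeas : Measurable Y := hXmeas.mul (measurable_const.indicator hAmeas)
  have hYnn : ∀ ω, 0 ≤ Y ω := fun ω =>
    mul_nonneg (hXnonneg ω) (Set.indicator_nonneg (fun _ _ => zero_le_one) ω)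
  have hsq : ∀ ω, X ω ^ 2 * A.indicator (fun _ => (1:ℝ)) ω = Y ω ^ 2 := by
    intro ω
    by_cases h : ω ∈ A
    · simp [hYdef, Set.indicator_of_mem h]
    · simp [hYdef, Set.indicator_of_notMem h]
  rw [integral_congr_ae (Filter.Eventually.of_forall hsq)]
  -- tail bound for Y
  have tailY : ∀ t : ℝ, 0 < t →
      P {a | t ≤ Y a} ≤ ENNReal.ofReal (Real.exp (-(max R t - m)^2/(2*σ^2))) := by
    intro t ht
    have hsub : {a | t ≤ Y a} ⊆ {ω | m + (max R t - m) ≤ X ω} := by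
      intro a ha
      simp only [Set.mem_setOf_eq] at ha ⊢
      by_cases h : a ∈ A
      · have hRa : R ≤ X a := by simpa [hAdef] using h
        have hYa : Y a = X a := by simp [hYdef, Set.indicator_of_mem h]
        have hta : t ≤ X a := by rw [hYa] at ha; exact ha
        have hmax : max R t ≤ X a := max_le hRa hta
        linarith
      · exfalso
        have hYa : Y a = 0 := by simp [hYdef, Set.indicator_of_notMem h]
        rw [hYa] at ha; linarith
    refine (measure_mono hsub).trans (htail _ ?_)
    have : m < max R t := lt_of_lt_of_le hR (le_max_left _ _)
    linarith
  have key : ∫ ω, Y ω ^ 2 ∂P ≤ C * (R^2 + 2*σ^2 + Real.sqrt (2*π) * m * σ) := by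
    rw [integral_eq_lintegral_of_nonneg_ae
      (Filter.Eventually.of_forall fun ω => sq_nonneg (Y ω))
      ((hYmeas.pow_const 2).aestronglyMeasurable)]
    have hlayer : ∫⁻ ω, ENNReal.ofReal (Y ω ^ 2) ∂P
        = ∫⁻ t in Ioi (0:ℝ), P {a | t ≤ Y a} * ENNReal.ofReal (2*t) := by
      have h := lintegral_comp_eq_lintegral_meas_le_mul P
        (f := Y) (g := fun t => 2*t)
        (Filter.Eventually.of_forall hYnn) hYmeas.aemeasurable
        (fun t _ => (continuous_const.mul continuous_id).intervalIntegrable 0 t)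
        ((ae_restrict_iff' measurableSet_Ioi).2
          (Filter.Eventually.of_forall fun t ht => by
            have h0t : (0:ℝ) < t := ht
            linarith))
      rw [← h]
      apply lintegral_congr
      intro ω
      congr 1
      rw [intervalIntegral.integral_const_mul, my_integral_id]
      ring
    rw [hlayer]
    have hsplitset : Ioi (0:ℝ) = Ioc 0 R ∪ Ioi R := (Ioc_union_Ioi_eq_Ioi hR0.le).symm
    rw [hsplitset, lintegral_union measurableSet_Ioi (Ioc_disjoint_Ioi le_rfl)]
    have hp1 : ∫⁻ t in Ioc (0:ℝ) R, P {a | t ≤ Y a} * ENNReal.ofReal (2*t)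
        ≤ ENNReal.ofReal (C * R^2) := by
      have hmono : ∀ t ∈ Ioc (0:ℝ) R, P {a | t ≤ Y a} * ENNReal.ofReal (2*t)
          ≤ ENNReal.ofReal (C * (2*t)) := by
        intro t ht
        have h1 := tailY t ht.1
        rw [max_eq_left ht.2] at h1
        have h1' : P {a | t ≤ Y a} ≤ ENNReal.ofReal C := by
          rw [hCdef, hτdef]; exact h1
        calc P {a | t ≤ Y a} * ENNReal.ofReal (2*t)
            ≤ ENNReal.ofReal C * ENNReal.ofReal (2*t) := mul_le_mul_left h1' _
          _ = ENNReal.ofReal (C * (2*t)) := (ENNReal.ofReal_mul hC0.le).symm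
      calc (∫⁻ t in Ioc (0:ℝ) R, P {a | t ≤ Y a} * ENNReal.ofReal (2*t))
          ≤ ∫⁻ t in Ioc (0:ℝ) R, ENNReal.ofReal (C * (2*t)) :=
            setLIntegral_mono
              ((measurable_const.mul (measurable_const.mul measurable_id)).ennreal_ofReal)
              hmono
        _ = ENNReal.ofReal (∫ t in Ioc (0:ℝ) R, C * (2*t)) := by
            rw [← ofReal_integral_eq_lintegral_ofReal]
            · exact (continuous_const.mul
                (continuous_const.mul continuous_id)).integrableOn_Ioc
            · exact (ae_restrict_iff' measurableSet_Ioc).2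
                (Filter.Eventually.of_forall fun t ht => by
                  have : (0:ℝ) < t := ht.1
                  positivity)
        _ = ENNReal.ofReal (C * R^2) := by
            congr 1
            rw [← intervalIntegral.integral_of_le hR0.le,
              intervalIntegral.integral_const_mul, intervalIntegral.integral_const_mul,
              my_integral_id]
            ring
    set g2 : ℝ → ℝ := fun t => 2*(t-m)*Real.exp (-(t-m)^2/(2*σ^2))
      + (2*m*C)*Real.exp (-(t-R)^2/(2*σ^2)) with hg2def
    have hg2cont : Continuous g2 := by
      rw [hg2def]
      apply Continuous.add
      · exact (continuous_const.mul (continuous_id.sub continuous_const)).mul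
          ((((continuous_id.sub continuous_const).pow 2).neg.div_const _).rexp)
      · exact continuous_const.mul
          ((((continuous_id.sub continuous_const).pow 2).neg.div_const _).rexp)
    have hp2 : ∫⁻ t in Ioi R, P {a | t ≤ Y a} * ENNReal.ofReal (2*t)
        ≤ ENNReal.ofReal (2*σ^2*C + C * (Real.sqrt (2*π) * m * σ)) := by
      have hmono : ∀ t ∈ Ioi R, P {a | t ≤ Y a} * ENNReal.ofReal (2*t)
          ≤ ENNReal.ofReal (g2 t) := by
        intro t ht
        have ht' : R < t := ht
        have h1 := tailY t (hR0.trans ht')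
        rw [max_eq_right ht'.le] at h1
        have hreal : Real.exp (-(t-m)^2/(2*σ^2)) * (2*t) ≤ g2 t := by
          have hsq2 : τ^2 + (t-R)^2 ≤ (t-m)^2 := by
            rw [hτdef]; nlinarith [hτ, ht']
          have hexp : Real.exp (-(t-m)^2/(2*σ^2)) ≤ C * Real.exp (-(t-R)^2/(2*σ^2)) := by
            rw [hCdef, ← Real.exp_add]
            apply Real.exp_le_exp.2
            have h2σ : (0:ℝ) < 2*σ^2 := by positivity
            rw [← add_div, div_le_div_iff₀ h2σ h2σ]
            nlinarith [hsq2]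
          have hm2 : (0:ℝ) ≤ 2*m := by linarith
          calc Real.exp (-(t-m)^2/(2*σ^2)) * (2*t)
              = 2*(t-m)*Real.exp (-(t-m)^2/(2*σ^2))
                + 2*m*Real.exp (-(t-m)^2/(2*σ^2)) := by ring
            _ ≤ 2*(t-m)*Real.exp (-(t-m)^2/(2*σ^2))
                + 2*m*(C * Real.exp (-(t-R)^2/(2*σ^2))) := by
                have := mul_le_mul_of_nonneg_left hexp hm2
                linarith
            _ = g2 t := by rw [hg2def]; ring
        calc P {a | t ≤ Y a} * ENNReal.ofReal (2*t)
            ≤ ENNReal.ofReal (Real.exp (-(t-m)^2/(2*σ^2))) * ENNReal.ofReal (2*t) :=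
              mul_le_mul_left h1 _
          _ = ENNReal.ofReal (Real.exp (-(t-m)^2/(2*σ^2)) * (2*t)) :=
              (ENNReal.ofReal_mul (Real.exp_pos _).le).symm
          _ ≤ ENNReal.ofReal (g2 t) := ENNReal.ofReal_le_ofReal hreal
      have hint1 := f1_integrable m R σ hσ hR
      have hint2 : IntegrableOn (fun t => (2*m*C)*Real.exp (-(t-R)^2/(2*σ^2))) (Ioi R) :=
        (gauss_integrable R σ hσ).const_mul _
      have hg2int : IntegrableOn g2 (Ioi R) := hint1.add hint2
      have hg2nn : ∀ t ∈ Ioi R, 0 ≤ g2 t := by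
        intro t ht
        have hmt : m < t := hR.trans ht
        have h1 : 0 ≤ 2*(t-m)*Real.exp (-(t-m)^2/(2*σ^2)) :=
          mul_nonneg (by linarith) (Real.exp_pos _).le
        have h2 : 0 ≤ (2*m*C)*Real.exp (-(t-R)^2/(2*σ^2)) :=
          mul_nonneg (mul_nonneg (by linarith) hC0.le) (Real.exp_pos _).le
        rw [hg2def]
        dsimp only
        linarith
      calc (∫⁻ t in Ioi R, P {a | t ≤ Y a} * ENNReal.ofReal (2*t))
          ≤ ∫⁻ t in Ioi R, ENNReal.ofReal (g2 t) :=
            setLIntegral_mono (hg2cont.measurable.ennreal_ofReal) hmono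
        _ = ENNReal.ofReal (∫ t in Ioi R, g2 t) :=
            (ofReal_integral_eq_lintegral_ofReal hg2int
              ((ae_restrict_iff' measurableSet_Ioi).2
                (Filter.Eventually.of_forall hg2nn))).symm
        _ = ENNReal.ofReal (2*σ^2*C + C * (Real.sqrt (2*π) * m * σ)) := by
            congr 1
            rw [hg2def]
            rw [integral_add hint1 hint2, f1_integral m R σ hσ hR,
              MeasureTheory.integral_const_mul, gauss_shift R σ hσ]
            rw [hCdef, hτdef]
            ring
    have htotal : (∫⁻ t in Ioc (0:ℝ) R, P {a | t ≤ Y a} * ENNReal.ofReal (2*t))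
        + (∫⁻ t in Ioi R, P {a | t ≤ Y a} * ENNReal.ofReal (2*t))
        ≤ ENNReal.ofReal (C * (R^2 + 2*σ^2 + Real.sqrt (2*π) * m * σ)) := by
      refine (add_le_add hp1 hp2).trans ?_
      rw [← ENNReal.ofReal_add (by positivity)]
      · apply ENNReal.ofReal_le_ofReal
        have hs := Real.sqrt_nonneg (2*π)
        nlinarith [mul_nonneg (mul_nonneg hs hm0) hσ.le]
      · have hs := Real.sqrt_nonneg (2*π)
        nlinarith [mul_nonneg (mul_nonneg hs hm0) hσ.le, sq_nonneg σ]
    refine (ENNReal.toReal_le_of_le_ofReal ?_ htotal)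
    have hs := Real.sqrt_nonneg (2*π)
    nlinarith [mul_nonneg (mul_nonneg hs hm0) hσ.le, sq_nonneg R, sq_nonneg σ]
  calc ∫ ω, Y ω ^ 2 ∂P ≤ C * (R^2 + 2*σ^2 + Real.sqrt (2*π) * m * σ) := key
    _ = C * ((m+τ)^2 + 2*σ^2 + Real.sqrt (2*π) * m * σ) := by rw [hτdef]; ring_nf
    _ ≤ Real.exp (-τ^2/(4*σ^2)) * Real.sqrt (2*π) * (m^2 + 2*σ^2) := by
        rw [hCdef]
        exact exp_bound m τ σ hm0 hτ hσ
end

section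
/- Let Q > 0 and let F_Q = {x ↦ a(σ(w·x + b) - σ(b)) : a² + ‖w‖² ≤ 2Q, b ∈ ℝ} ⊂ C⁰(K) for a compact set K ⊂ B_R(0) ⊂ ℝ^d, where σ is ReLU. Then F_Q equals the image of the compact parameter set {(a,w,b) : a² + ‖w‖² ≤ 2Q, |b| ≤ √(2Q)·R} under the continuous parameter-to-function map into C⁰(K), and hence F_Q is compact in C⁰(K). -/
open scoped RealInnerProductSpace

theorem stmt_19 {d : ℕ} (Q R : ℝ) (hQ : 0 < Q) (hR : 0 < R)
    (K : Set (EuclideanSpace ℝ (Fin d))) (hK : IsCompact K)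
    (hKR : K ⊆ Metric.ball (0 : EuclideanSpace ℝ (Fin d)) R)
    (Φ : ℝ × EuclideanSpace ℝ (Fin d) × ℝ → C(K, ℝ))
    (hΦcont : Continuous Φ)
    (hΦ : ∀ (p : ℝ × EuclideanSpace ℝ (Fin d) × ℝ) (x : K),
      Φ p x = p.1 * (max (⟪p.2.1, (x : EuclideanSpace ℝ (Fin d))⟫ + p.2.2) 0 - max p.2.2 0)) :
    Φ '' {p | p.1 ^ 2 + ‖p.2.1‖ ^ 2 ≤ 2 * Q} =
        Φ '' {p | p.1 ^ 2 + ‖p.2.1‖ ^ 2 ≤ 2 * Q ∧ |p.2.2| ≤ Real.sqrt (2 * Q) * R} ∧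
      IsCompact (Φ '' {p | p.1 ^ 2 + ‖p.2.1‖ ^ 2 ≤ 2 * Q}) := by
  set c : ℝ := Real.sqrt (2 * Q) * R with hc
  have hc0 : 0 ≤ c := mul_nonneg (Real.sqrt_nonneg _) hR.le
  -- key bound: for p in S and x in K, |⟪w,x⟫| ≤ c
  have key : ∀ p : ℝ × EuclideanSpace ℝ (Fin d) × ℝ,
      p.1 ^ 2 + ‖p.2.1‖ ^ 2 ≤ 2 * Q → ∀ x : K,
      |⟪p.2.1, (x : EuclideanSpace ℝ (Fin d))⟫| ≤ c := by
    rintro ⟨a, w, b⟩ hp x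
    have hw2 : ‖w‖ ^ 2 ≤ 2 * Q := by nlinarith [sq_nonneg a]
    have hw : ‖w‖ ≤ Real.sqrt (2 * Q) := by
      nlinarith [Real.sq_sqrt (show (0:ℝ) ≤ 2*Q by positivity), Real.sqrt_nonneg (2*Q),
        norm_nonneg w, sq_nonneg (‖w‖ - Real.sqrt (2*Q))]
    have hxR : ‖(x : EuclideanSpace ℝ (Fin d))‖ ≤ R := by
      have := hKR x.2
      rw [Metric.mem_ball, dist_zero_right] at this
      exact this.le
    calc |⟪w, (x : EuclideanSpace ℝ (Fin d))⟫| ≤ ‖w‖ * ‖(x : EuclideanSpace ℝ (Fin d))‖ :=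
          abs_real_inner_le_norm _ _
      _ ≤ Real.sqrt (2 * Q) * R :=
          mul_le_mul hw hxR (norm_nonneg _) (Real.sqrt_nonneg _)
  -- image equality
  have himg : Φ '' {p | p.1 ^ 2 + ‖p.2.1‖ ^ 2 ≤ 2 * Q} =
      Φ '' {p | p.1 ^ 2 + ‖p.2.1‖ ^ 2 ≤ 2 * Q ∧ |p.2.2| ≤ c} := by
    apply Set.Subset.antisymm
    · rintro f ⟨⟨a, w, b⟩, hp, rfl⟩
      by_cases hb1 : b ≤ c
      · by_cases hb2 : -c ≤ b
        · exact ⟨(a, w, b), ⟨hp, abs_le.mpr ⟨hb2, hb1⟩⟩, rfl⟩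
        · -- b < -c : both functions are 0
          push_neg at hb2
          refine ⟨(a, w, -c), ⟨hp, by rw [abs_neg, abs_of_nonneg hc0]⟩, ?_⟩
          ext x
          have h1 := key (a, w, b) hp x
          rw [hΦ (a, w, -c) x, hΦ (a, w, b) x]
          simp only
          rw [max_eq_right (by have := (abs_le.mp h1).2; linarith),
            max_eq_right (by linarith),
            max_eq_right (by have := (abs_le.mp h1).2; linarith),
            max_eq_right (by linarith)]
      · -- b > c : both are a * ⟪w,x⟫
        push_neg at hb1
        refine ⟨(a, w, c), ⟨hp, by rw [abs_of_nonneg hc0]⟩, ?_⟩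
        ext x
        have h1 := key (a, w, b) hp x
        rw [hΦ (a, w, c) x, hΦ (a, w, b) x]
        simp only
        rw [max_eq_left (by have := (abs_le.mp h1).1; linarith),
          max_eq_left hc0,
          max_eq_left (by have := (abs_le.mp h1).1; linarith),
          max_eq_left (by linarith)]
        ring
    · exact Set.image_mono (fun p hp => hp.1)
  refine ⟨himg, ?_⟩
  rw [himg]
  apply IsCompact.image _ hΦcont
  -- the restricted parameter set is compact
  have hsub : {p : ℝ × EuclideanSpace ℝ (Fin d) × ℝ |
      p.1 ^ 2 + ‖p.2.1‖ ^ 2 ≤ 2 * Q ∧ |p.2.2| ≤ c} ⊆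
      (Metric.closedBall (0:ℝ) (Real.sqrt (2*Q))) ×ˢ
        ((Metric.closedBall (0 : EuclideanSpace ℝ (Fin d)) (Real.sqrt (2*Q))) ×ˢ
          (Set.Icc (-c) c)) := by
    rintro ⟨a, w, b⟩ ⟨hp, hb⟩
    have ha2 : a ^ 2 ≤ 2 * Q := by nlinarith [sq_nonneg ‖w‖]
    have hw2 : ‖w‖ ^ 2 ≤ 2 * Q := by nlinarith [sq_nonneg a]
    have hsq : ∀ t : ℝ, 0 ≤ t → t ^ 2 ≤ 2 * Q → t ≤ Real.sqrt (2 * Q) := by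
      intro t ht h
      nlinarith [Real.sq_sqrt (show (0:ℝ) ≤ 2*Q by positivity), Real.sqrt_nonneg (2*Q),
        sq_nonneg (t - Real.sqrt (2*Q))]
    refine ⟨?_, ?_, ?_⟩
    · simp only [Metric.mem_closedBall, dist_zero_right, Real.norm_eq_abs]
      exact hsq _ (abs_nonneg a) (by rwa [sq_abs])
    · simp only [Metric.mem_closedBall, dist_zero_right]
      exact hsq _ (norm_nonneg w) hw2
    · exact abs_le.mp hb
  have hclosed : IsClosed {p : ℝ × EuclideanSpace ℝ (Fin d) × ℝ |
      p.1 ^ 2 + ‖p.2.1‖ ^ 2 ≤ 2 * Q ∧ |p.2.2| ≤ c} := by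
    apply IsClosed.inter
    · exact isClosed_le ((continuous_fst.pow 2).add ((continuous_snd.fst.norm).pow 2))
        continuous_const
    · exact isClosed_le continuous_snd.snd.abs continuous_const
  exact ((isCompact_closedBall _ _).prod
    ((isCompact_closedBall _ _).prod isCompact_Icc)).of_isClosed_subset hclosed hsub
end
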